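/- Let T be an essentially small triangulated category, K a thick subcategory, and F : T → T/K the quotient functor. Then the induced map ᵃF : Spec△(T/K) → Spec△(T), Q ↦ F^{-1}(Q), is injective and continuous with image {P ∈ Spec△(T) | K ⊆ P}, and satisfies (ᵃF)^{-1}(Supp△(M)) = Supp△(F(M)) for every object M of T; it is a topological embedding onto its image. -/

import Mathlib

open CategoryTheory Limits Pretriangulated

universe v u

variable (C : Type u) [Category.{v} C] [Preadditive C] [HasZeroObject C]
  [HasShift C ℤ] [∀ n : ℤ, (shiftFunctor C n).Additive] [Pretriangulated C]

/-- A thick subcategory of a (pre)triangulated category, modelled as a set of objects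
closed under isomorphisms, zero objects, shifts, extensions and direct summands. -/
structure ThickSubcat : Type (max u v) where
  set : Set C
  mem_of_iso : ∀ {X Y : C}, (X ≅ Y) → X ∈ set → Y ∈ set
  zero_mem : ∀ Z : C, IsZero Z → Z ∈ set
  shift_mem : ∀ (X : C) (n : ℤ), X ∈ set → X⟦n⟧ ∈ set
  ext_mem : ∀ T : Triangle C, T ∈ (distTriang C) → T.obj₁ ∈ set → T.obj₃ ∈ set → T.obj₂ ∈ set
  summand_mem : ∀ (X Y : C) (i : Y ⟶ X) (r : X ⟶ Y), i ≫ r = 𝟙 Y → X ∈ set → Y ∈ set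

lemma ThickSubcat.set_injective : Function.Injective (ThickSubcat.set (C := C)) := by
  rintro ⟨s, _, _, _, _, _⟩ ⟨t, _, _, _, _, _⟩ h
  cases h; rfl

instance : PartialOrder (ThickSubcat C) :=
  PartialOrder.lift ThickSubcat.set (ThickSubcat.set_injective C)

/-- A thick subcategory `P` is *prime* if there is a unique minimal element among the
thick subcategories properly containing `P`. -/
def IsPrimeThick (P : ThickSubcat C) : Prop :=
  ∃! X : ThickSubcat C, Minimal (fun Y : ThickSubcat C => P < Y) X

/-- The spectrum: the set of prime thick subcategories. -/
def SpecTri := {P : ThickSubcat C // IsPrimeThick C P}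

/-- The support of an object `M`. -/
def suppObj (M : C) : Set (SpecTri C) := {P | M ∉ P.1.set}

/-- The topology on the spectrum, with closed basis the supports `suppObj M`. -/
instance : TopologicalSpace (SpecTri C) :=
  TopologicalSpace.generateFrom {U | ∃ M : C, U = (suppObj C M)ᶜ}

/-- The class of morphisms of `C` whose cone lies in the thick subcategory `K`. -/
def coneInK (K : ThickSubcat C) : MorphismProperty C :=
  fun X Y f => ∃ (Z : C) (g : Y ⟶ Z) (h : Z ⟶ X⟦(1 : ℤ)⟧),
    Triangle.mk f g h ∈ (distTriang C) ∧ Z ∈ K.set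

open ZeroObject
namespace VerdierAux

universe v₁ u₁ v₂ u₂

section

variable {C : Type u₁} [Category.{v₁} C] [Preadditive C] [HasZeroObject C]
  [HasShift C ℤ] [∀ n : ℤ, (shiftFunctor C n).Additive] [Pretriangulated C]

namespace TS

variable (P : ThickSubcat C)

lemma mem₂ (T : Triangle C) (hT : T ∈ distTriang C) (h₁ : T.obj₁ ∈ P.set)
    (h₃ : T.obj₃ ∈ P.set) : T.obj₂ ∈ P.set :=
  P.ext_mem T hT h₁ h₃

lemma mem₁ (T : Triangle C) (hT : T ∈ distTriang C) (h₂ : T.obj₂ ∈ P.set)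
    (h₃ : T.obj₃ ∈ P.set) : T.obj₁ ∈ P.set :=
  P.ext_mem T.invRotate (inv_rot_of_distTriang T hT) (P.shift_mem _ _ h₃) h₂

lemma mem₃ (T : Triangle C) (hT : T ∈ distTriang C) (h₁ : T.obj₁ ∈ P.set)
    (h₂ : T.obj₂ ∈ P.set) : T.obj₃ ∈ P.set :=
  P.ext_mem T.rotate (rot_of_distTriang T hT) h₂ (P.shift_mem _ _ h₁)

lemma mem_unshift (X : C) (n : ℤ) (h : X⟦n⟧ ∈ P.set) : X ∈ P.set :=
  P.mem_of_iso ((shiftFunctorCompIsoId C n (-n) (by omega)).app X) (P.shift_mem _ (-n) h)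

lemma zero_obj_mem : (0 : C) ∈ P.set := P.zero_mem 0 (isZero_zero C)

lemma mem_biprod (X Y : C) (hX : X ∈ P.set) (hY : Y ∈ P.set) : (X ⊞ Y) ∈ P.set :=
  TS.mem₂ P _ (binaryBiproductTriangle_distinguished X Y) hX hY

end TS

variable (K : ThickSubcat C)

/-- chains of morphisms with cone in `K` -/
inductive Wm : ∀ {X Y : C}, (X ⟶ Y) → Prop
  | id (X : C) : Wm (𝟙 X)
  | snoc {X Y Z : C} (f : X ⟶ Y) (g : Y ⟶ Z) : Wm f → coneInK C K g → Wm (f ≫ g)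

variable {K}

lemma Wm.single {X Y : C} {g : X ⟶ Y} (hg : coneInK C K g) : Wm K g := by
  have := Wm.snoc (𝟙 X) g (Wm.id X) hg
  rwa [Category.id_comp] at this

lemma Wm.comp {X Y Z : C} {f : X ⟶ Y} {g : Y ⟶ Z} (hf : Wm K f) (hg : Wm K g) :
    Wm K (f ≫ g) := by
  induction hg with
  | id => rwa [Category.comp_id]
  | snoc g' w hg' hw ih =>
    rw [← Category.assoc]
    exact Wm.snoc _ _ ih hw

variable (K)

/-- `Wm K` as a morphism property. -/
def WmP : MorphismProperty C := fun _ _ f => Wm K f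

instance : (WmP K).IsMultiplicative where
  id_mem X := Wm.id X
  comp_mem f g hf hg := Wm.comp hf hg

lemma W_le_WmP : coneInK C K ≤ WmP K := fun _ _ _ h => Wm.single h

lemma WmP_isInvertedBy {E : Type*} [Category E] (G : C ⥤ E)
    (hG : (coneInK C K).IsInvertedBy G) : (WmP K).IsInvertedBy G := by
  intro X Y f hf
  induction hf with
  | id => rw [G.map_id]; infer_instance
  | snoc f g hf hg ih =>
    rw [G.map_comp]
    have := hG _ hg
    exact IsIso.comp_isIso

end

end VerdierAux
section
open CategoryTheory Limits Pretriangulated ZeroObject CategoryTheory.Category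
namespace VerdierAux

variable {C : Type u₁} [Category.{v₁} C] [Preadditive C] [HasZeroObject C]
  [HasShift C ℤ] [∀ n : ℤ, (shiftFunctor C n).Additive] [Pretriangulated C]
variable {K : ThickSubcat C}

/-- single-step left Ore condition -/
lemma ore_single {X' X Y : C} (s : X' ⟶ X) (hs : coneInK C K s) (u : X' ⟶ Y) :
    ∃ (Y' : C) (v : Y ⟶ Y') (x : X ⟶ Y'), coneInK C K v ∧ u ≫ v = s ≫ x := by
  obtain ⟨Z, g, h, H, mem⟩ := hs
  obtain ⟨Y', s', f', mem'⟩ := distinguished_cocone_triangle₂ (h ≫ u⟦(1 : ℤ)⟧')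
  obtain ⟨b, hb₁, _⟩ := complete_distinguished_triangle_morphism₂ _ _ H mem' u (𝟙 Z) (Category.id_comp _).symm
  exact ⟨Y', s', b, ⟨Z, f', h ≫ u⟦(1 : ℤ)⟧', mem', mem⟩, hb₁.symm⟩

/-- left Ore condition for chains -/
lemma ore {X' X : C} (s : X' ⟶ X) (hs : Wm K s) :
    ∀ {Y : C} (u : X' ⟶ Y),
      ∃ (Y' : C) (v : Y ⟶ Y') (x : X ⟶ Y'), Wm K v ∧ u ≫ v = s ≫ x := by
  induction hs with
  | id => exact fun u => ⟨_, 𝟙 _, u, Wm.id _, by simp⟩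
  | snoc f w hf hw ih =>
    intro Y u
    obtain ⟨Y₁, v₁, x₁, hv₁, h₁⟩ := ih u
    obtain ⟨Y₂, v₂, x₂, hv₂, h₂⟩ := ore_single w hw x₁
    exact ⟨Y₂, v₁ ≫ v₂, x₂, hv₁.comp (Wm.single hv₂),
      by rw [← assoc, h₁, assoc, h₂, ← assoc]⟩

/-- single-step ext property -/
lemma ext_single {X' X Y : C} (s : X' ⟶ X) (hs : coneInK C K s) (f : X ⟶ Y)
    (hf : s ≫ f = 0) :
    ∃ (Y' : C) (t : Y ⟶ Y'), coneInK C K t ∧ f ≫ t = 0 := by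
  obtain ⟨Z, g, h, H, mem⟩ := hs
  obtain ⟨q, hq⟩ := Triangle.yoneda_exact₂ _ H f hf
  obtain ⟨Y', r, t', mem'⟩ := distinguished_cocone_triangle q
  refine ⟨Y', r, ⟨Z⟦(1 : ℤ)⟧, t', -q⟦(1 : ℤ)⟧', rot_of_distTriang _ mem',
    K.shift_mem _ _ mem⟩, ?_⟩
  rw [hq]
  refine (assoc _ _ _).trans ?_
  rw [show q ≫ r = 0 from comp_distTriang_mor_zero₁₂ _ mem']
  exact comp_zero

lemma ext_chain {X' X : C} (s : X' ⟶ X) (hs : Wm K s) :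
    ∀ {Y : C} (f : X ⟶ Y), s ≫ f = 0 →
      ∃ (Y' : C) (t : Y ⟶ Y'), Wm K t ∧ f ≫ t = 0 := by
  induction hs with
  | id => exact fun f hf => ⟨_, 𝟙 _, Wm.id _, by simpa using hf⟩
  | snoc g w hg hw ih =>
    intro Y f hf
    rw [assoc] at hf
    obtain ⟨Y₁, t₁, ht₁, h₁⟩ := ih _ hf
    rw [assoc] at h₁
    obtain ⟨Y₂, t₂, ht₂, h₂⟩ := ext_single w hw _ h₁
    rw [assoc] at h₂
    exact ⟨Y₂, t₁ ≫ t₂, ht₁.comp (Wm.single ht₂), h₂⟩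

instance (K : ThickSubcat C) : (WmP K).HasLeftCalculusOfFractions where
  exists_leftFraction X Y φ := by
    obtain ⟨Y', v, x, hv, hvx⟩ := ore φ.s φ.hs φ.f
    exact ⟨MorphismProperty.LeftFraction.mk x v hv, hvx⟩
  ext X' X Y f₁ f₂ s hs h := by
    have : s ≫ (f₁ - f₂) = 0 := by rw [Preadditive.comp_sub, h, sub_self]
    obtain ⟨Y', t, ht, h'⟩ := ext_chain s hs _ this
    refine ⟨Y', t, ht, ?_⟩
    rw [Preadditive.sub_comp] at h'
    rwa [← sub_eq_zero]

end VerdierAux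
end
section
open CategoryTheory Limits Pretriangulated ZeroObject CategoryTheory.Category
namespace VerdierAux

variable {C : Type u₁} [Category.{v₁} C] [Preadditive C] [HasZeroObject C]
  [HasShift C ℤ] [∀ n : ℤ, (shiftFunctor C n).Additive] [Pretriangulated C]
variable (K : ThickSubcat C)

/-- the strict universal property of `(coneInK C K).Q` with respect to `WmP K` -/
noncomputable def supt (E : Type*) [Category E] :
    Localization.StrictUniversalPropertyFixedTarget (coneInK C K).Q (WmP K) E where
  inverts := WmP_isInvertedBy K _ (coneInK C K).Q_inverts
  lift G hG := Localization.Construction.lift G (fun _ _ f hf => hG f (Wm.single hf))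
  fac G hG := Localization.Construction.fac _ _
  uniq _ _ h := Localization.Construction.uniq _ _ h

lemma Q_isLocalization_WmP : (coneInK C K).Q.IsLocalization (WmP K) :=
  Functor.IsLocalization.mk' _ _ (supt K _) (supt K _)

variable {D : Type u₂} [Category.{v₂} D]
variable (F : C ⥤ D) [F.IsLocalization (coneInK C K)]

lemma F_isLocalization_WmP : F.IsLocalization (WmP K) := by
  haveI := Q_isLocalization_WmP K
  have e : (coneInK C K).Q ⋙ (Localization.uniq (coneInK C K).Q F (coneInK C K)).functor ≅ F :=
    Localization.compUniqFunctor _ _ _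
  exact Functor.IsLocalization.of_iso _ e

end VerdierAux
end
section
open CategoryTheory Limits Pretriangulated ZeroObject CategoryTheory.Category
namespace VerdierAux

variable {C : Type u₁} [Category.{v₁} C] [Preadditive C] [HasZeroObject C]
  [HasShift C ℤ] [∀ n : ℤ, (shiftFunctor C n).Additive] [Pretriangulated C]
variable (K : ThickSubcat C)

/-- Key lemma: a chain morphism factoring through an object of `K` has endpoints in `K`. -/
lemma Splus {A B : C} (σ : A ⟶ B) (hσ : Wm K σ) :
    ∀ {κ : C} (a : A ⟶ κ) (b : κ ⟶ B), κ ∈ K.set → a ≫ b = σ →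
      A ∈ K.set ∧ B ∈ K.set := by
  induction hσ with
  | id =>
    intro κ a b hκ hab
    have h : _ ∈ K.set := K.summand_mem κ _ a b hab hκ
    exact ⟨h, h⟩
  | snoc σ' w hσ' hw ih =>
    intro κ a b hκ hab
    obtain ⟨Z, u, v, hT, hZ⟩ := hw
    have hδ : a ≫ (b ≫ u) = 0 := by
      rw [← assoc, hab, assoc]
      rw [show w ≫ u = 0 from comp_distTriang_mor_zero₁₂ _ hT, comp_zero]
    obtain ⟨κ', g', h', hT'⟩ := distinguished_cocone_triangle₁ (b ≫ u)
    have hκ' : κ' ∈ K.set := TS.mem₁ K _ hT' hκ hZ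
    obtain ⟨a2, ha2⟩ : ∃ a2 : A ⟶ κ', a = a2 ≫ g' :=
      Triangle.coyoneda_exact₂ _ hT' a hδ
    have hb' : (g' ≫ b) ≫ u = 0 := by
      rw [assoc]
      exact comp_distTriang_mor_zero₁₂ _ hT'
    obtain ⟨y₀, hy₀⟩ : ∃ y₀ : κ' ⟶ _, g' ≫ b = y₀ ≫ w :=
      Triangle.coyoneda_exact₂ _ hT (g' ≫ b) hb'
    have hz0 : (σ' - a2 ≫ y₀) ≫ (Triangle.mk w u v).invRotate.mor₂ = 0 := by
      dsimp only [Triangle.invRotate, Triangle.mk]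
      rw [Preadditive.sub_comp, ← hab, assoc, ← hy₀, ← assoc, ← ha2, sub_self]
      rfl
    obtain ⟨z, hz⟩ := Triangle.coyoneda_exact₂ _ (inv_rot_of_distTriang _ hT)
      (σ' - a2 ≫ y₀) hz0
    have hκ₂ : (κ' ⊞ (Triangle.mk w u v).invRotate.obj₁) ∈ K.set :=
      TS.mem_biprod K _ _ hκ' (K.shift_mem Z (-1) hZ)
    have hfac : biprod.lift a2 z ≫ biprod.desc y₀ ((Triangle.mk w u v).invRotate.mor₁) = σ' := by
      refine biprod.lift_desc.trans ?_
      exact (congrArg (a2 ≫ y₀ + ·) hz.symm).trans (by abel)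
    obtain ⟨hA, hB'⟩ := ih (biprod.lift a2 z) (biprod.desc y₀ _) hκ₂ hfac
    exact ⟨hA, TS.mem₂ K _ hT hB' hZ⟩

lemma coneInK_zero_to_zero (X : C) (hX : X ∈ K.set) : coneInK C K (0 : X ⟶ (0 : C)) :=
  ⟨X⟦(1 : ℤ)⟧, 0, -(𝟙 X)⟦(1 : ℤ)⟧',
    rot_of_distTriang _ (contractible_distinguished X), K.shift_mem X 1 hX⟩

variable {D : Type u₂} [Category.{v₂} D] [Preadditive D] [HasZeroObject D]
  [HasShift D ℤ] [∀ n : ℤ, (shiftFunctor D n).Additive] [Pretriangulated D]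
variable (F : C ⥤ D) [F.Additive] [F.IsLocalization (coneInK C K)]

lemma isZero_F_of_mem (X : C) (hX : X ∈ K.set) : IsZero (F.obj X) := by
  haveI h := Localization.inverts F (coneInK C K) _ (coneInK_zero_to_zero K X hX)
  have h0 : IsZero (F.obj (0 : C)) := F.map_isZero (isZero_zero C)
  exact h0.of_iso (asIso (F.map (0 : X ⟶ (0 : C))))

lemma mem_of_isZero (M : C) (hM : IsZero (F.obj M)) : M ∈ K.set := by
  haveI := F_isLocalization_WmP K F
  have h1 : F.map (𝟙 M) = F.map (0 : M ⟶ M) := by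
    rw [F.map_id, F.map_zero]
    exact hM.eq_of_src _ _
  obtain ⟨Z, s, hs, heq⟩ := (MorphismProperty.map_eq_iff_postcomp F (WmP K) _ _).1 h1
  have hs0 : s = 0 := by simpa using heq
  exact (Splus K s hs (0 : M ⟶ (0 : C)) 0 (TS.zero_obj_mem _) (by simp [hs0])).1

end VerdierAux
end
section
open CategoryTheory Limits Pretriangulated ZeroObject CategoryTheory.Category
namespace VerdierAux

variable {C : Type u₁} [Category.{v₁} C] [Preadditive C] [HasZeroObject C]
  [HasShift C ℤ] [∀ n : ℤ, (shiftFunctor C n).Additive] [Pretriangulated C]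
variable (K : ThickSubcat C)
variable {D : Type u₂} [Category.{v₂} D] [Preadditive D] [HasZeroObject D]
  [HasShift D ℤ] [∀ n : ℤ, (shiftFunctor D n).Additive] [Pretriangulated D]
variable (F : C ⥤ D) [F.CommShift ℤ] [F.IsTriangulated] [F.Additive]
  [F.IsLocalization (coneInK C K)]

lemma mem_iff_of_Wm {P : ThickSubcat C} (hKP : K.set ⊆ P.set) {A B : C} (σ : A ⟶ B)
    (hσ : Wm K σ) : A ∈ P.set ↔ B ∈ P.set := by
  induction hσ with
  | id => exact Iff.rfl
  | snoc σ' w hσ' hw ih =>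
    obtain ⟨Z, u, v, hT, hZ⟩ := hw
    exact ih.trans ⟨fun hh => TS.mem₂ P _ hT hh (hKP hZ), fun hh => TS.mem₁ P _ hT hh (hKP hZ)⟩

lemma mem_of_iso_FObj {P : ThickSubcat C} (hKP : K.set ⊆ P.set) {A B : C}
    (hB : B ∈ P.set) (e : F.obj A ≅ F.obj B) : A ∈ P.set := by
  haveI := F_isLocalization_WmP K F
  obtain ⟨φ, hφ⟩ := Localization.exists_leftFraction F (WmP K) e.hom
  have hY' : φ.Y' ∈ P.set := (mem_iff_of_Wm K hKP φ.s φ.hs).1 hB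
  haveI := Localization.inverts F (WmP K) _ φ.hs
  have hiso : IsIso (F.map φ.f) := by
    have h2 : F.map φ.f = e.hom ≫ F.map φ.s := by
      rw [hφ]
      exact (MorphismProperty.LeftFraction.map_comp_map_s φ F
        (Localization.inverts F (WmP K))).symm
    rw [h2]
    infer_instance
  obtain ⟨Cf, g, h, hT⟩ := distinguished_cocone_triangle φ.f
  have hz : IsZero (F.obj Cf) :=
    Triangle.isZero₃_of_isIso₁ _ (F.map_distinguished _ hT) (by exact hiso)
  exact TS.mem₁ P _ hT hY' (hKP (mem_of_isZero K F Cf hz))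

/-- the preimage of a thick subcategory -/
def preT (Q : ThickSubcat D) : ThickSubcat C where
  set := F.obj ⁻¹' Q.set
  mem_of_iso e h := Q.mem_of_iso (F.mapIso e) h
  zero_mem Z hZ := Q.zero_mem _ (F.map_isZero hZ)
  shift_mem X n h := Q.mem_of_iso ((F.commShiftIso n).app X).symm (Q.shift_mem _ n h)
  ext_mem T hT h₁ h₃ := Q.ext_mem (F.mapTriangle.obj T) (F.map_distinguished T hT) h₁ h₃
  summand_mem X Y i r hir h := Q.summand_mem (F.obj X) (F.obj Y) (F.map i) (F.map r)
    (by rw [← F.map_comp, hir, F.map_id]) h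

lemma K_subset_preT (Q : ThickSubcat D) : K.set ⊆ (preT F Q).set :=
  fun X hX => Q.zero_mem _ (isZero_F_of_mem K F X hX)

/-- the image set -/
def imgSet (P : ThickSubcat C) : Set D := {Y | ∃ X, X ∈ P.set ∧ Nonempty (F.obj X ≅ Y)}

lemma imgSet_ext {P : ThickSubcat C} (hKP : K.set ⊆ P.set) (T : Triangle D)
    (hT : T ∈ distTriang D) (h₁ : T.obj₁ ∈ imgSet F P) (h₃ : T.obj₃ ∈ imgSet F P) :
    T.obj₂ ∈ imgSet F P := by
  haveI := F_isLocalization_WmP K F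
  obtain ⟨X₁, hX₁, ⟨e₁⟩⟩ := h₁
  obtain ⟨X₃, hX₃, ⟨e₃⟩⟩ := h₃
  obtain ⟨φ, hφ⟩ := Localization.exists_leftFraction F (WmP K)
    (e₃.hom ≫ T.mor₃ ≫ (shiftFunctor D (1:ℤ)).map e₁.inv ≫ ((F.commShiftIso (1:ℤ)).app X₁).inv)
  have hY' : φ.Y' ∈ P.set := (mem_iff_of_Wm K hKP φ.s φ.hs).1 (P.shift_mem X₁ 1 hX₁)
  obtain ⟨Ca, g, h, hTa⟩ := distinguished_cocone_triangle φ.f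
  have hCa : Ca ∈ P.set := TS.mem₃ P _ hTa hX₃ hY'
  haveI := Localization.inverts F (WmP K) _ φ.hs
  have hmap : F.map φ.f
      = (e₃.hom ≫ T.mor₃ ≫ (shiftFunctor D (1:ℤ)).map e₁.inv
          ≫ ((F.commShiftIso (1:ℤ)).app X₁).inv) ≫ F.map φ.s := by
    rw [hφ]
    exact (MorphismProperty.LeftFraction.map_comp_map_s φ F
      (Localization.inverts F (WmP K))).symm
  have comm : (F.mapTriangle.obj (Triangle.mk φ.f g h)).mor₁
      ≫ ((asIso (F.map φ.s)).symm ≪≫ (F.commShiftIso (1:ℤ)).app X₁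
          ≪≫ (shiftFunctor D (1:ℤ)).mapIso e₁).hom
      = e₃.hom ≫ (T.rotate.rotate).mor₁ := by
    dsimp
    show F.map φ.f ≫ _ = _
    rw [hmap]
    simp
    rfl
  have eT := isoTriangleOfIso₁₂ _ _ (F.map_distinguished _ hTa)
    (rot_of_distTriang _ (rot_of_distTriang _ hT)) e₃
    ((asIso (F.map φ.s)).symm ≪≫ (F.commShiftIso (1:ℤ)).app X₁
      ≪≫ (shiftFunctor D (1:ℤ)).mapIso e₁) comm
  have e5 : F.obj Ca ≅ T.obj₂⟦(1:ℤ)⟧ := Triangle.π₃.mapIso eT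
  refine ⟨Ca⟦(-1:ℤ)⟧, P.shift_mem Ca (-1) hCa, ⟨?_⟩⟩
  exact (F.commShiftIso (-1:ℤ)).app Ca ≪≫ (shiftFunctor D (-1:ℤ)).mapIso e5
    ≪≫ (shiftFunctorCompIsoId D (1:ℤ) (-1:ℤ) (by omega)).app T.obj₂

lemma imgSet_summand {P : ThickSubcat C} (hKP : K.set ⊆ P.set) (Yb Y₀ : D)
    (i : Y₀ ⟶ Yb) (r : Yb ⟶ Y₀) (hir : i ≫ r = 𝟙 Y₀) (hYb : Yb ∈ imgSet F P) :
    Y₀ ∈ imgSet F P := by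
  haveI := F_isLocalization_WmP K F
  haveI : F.EssSurj := Localization.essSurj F (coneInK C K)
  obtain ⟨X, hX, ⟨e⟩⟩ := hYb
  obtain ⟨φ, hφ⟩ := Localization.exists_leftFraction F (WmP K)
    ((F.objObjPreimageIso Y₀).hom ≫ i ≫ e.inv)
  have hZ : φ.Y' ∈ P.set := (mem_iff_of_Wm K hKP φ.s φ.hs).1 hX
  haveI := Localization.inverts F (WmP K) _ φ.hs
  have hsplit : F.map φ.f ≫ (inv (F.map φ.s)
      ≫ (e.hom ≫ r ≫ (F.objObjPreimageIso Y₀).inv)) = 𝟙 _ := by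
    have h2 : F.map φ.f = ((F.objObjPreimageIso Y₀).hom ≫ i ≫ e.inv) ≫ F.map φ.s := by
      rw [hφ]
      exact (MorphismProperty.LeftFraction.map_comp_map_s φ F
        (Localization.inverts F (WmP K))).symm
    rw [h2]
    simp [reassoc_of% hir]
  obtain ⟨Ca, g, h, hTa⟩ := distinguished_cocone_triangle φ.f
  have hTD := F.map_distinguished _ hTa
  have h0 : (F.map h ≫ (F.commShiftIso (1:ℤ)).hom.app (F.objPreimage Y₀))
      ≫ (F.map φ.f)⟦(1:ℤ)⟧' = 0 := comp_distTriang_mor_zero₃₁ _ hTD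
  have hmor₃ : (F.map h ≫ (F.commShiftIso (1:ℤ)).hom.app (F.objPreimage Y₀)) = 0 := by
    have heq : (F.map h ≫ (F.commShiftIso (1:ℤ)).hom.app (F.objPreimage Y₀))
        = ((F.map h ≫ (F.commShiftIso (1:ℤ)).hom.app (F.objPreimage Y₀))
            ≫ (F.map φ.f)⟦(1:ℤ)⟧')
          ≫ (inv (F.map φ.s) ≫ (e.hom ≫ r ≫ (F.objObjPreimageIso Y₀).inv))⟦(1:ℤ)⟧' := by
      rw [assoc, ← Functor.map_comp, hsplit]
      simp
    rw [heq, h0, zero_comp]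
  obtain ⟨eB, -, -⟩ := exists_iso_binaryBiproduct_of_distTriang _ hTD (by exact hmor₃)
  haveI : PreservesBinaryBiproducts F := preservesBinaryBiproducts_of_preservesBiproducts F
  have hmem : ((F.objPreimage Y₀) ⊞ Ca) ∈ P.set :=
    mem_of_iso_FObj K F hKP hZ (F.mapBiprod _ _ ≪≫ eB.symm)
  have hX₀ : F.objPreimage Y₀ ∈ P.set :=
    P.summand_mem _ _ biprod.inl biprod.fst (by simp) hmem
  exact ⟨_, hX₀, ⟨F.objObjPreimageIso Y₀⟩⟩

end VerdierAux
end
section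
open CategoryTheory Limits Pretriangulated ZeroObject CategoryTheory.Category
namespace VerdierAux

variable {C : Type u₁} [Category.{v₁} C] [Preadditive C] [HasZeroObject C]
  [HasShift C ℤ] [∀ n : ℤ, (shiftFunctor C n).Additive] [Pretriangulated C]
variable (K : ThickSubcat C)
variable {D : Type u₂} [Category.{v₂} D] [Preadditive D] [HasZeroObject D]
  [HasShift D ℤ] [∀ n : ℤ, (shiftFunctor D n).Additive] [Pretriangulated D]
variable (F : C ⥤ D) [F.CommShift ℤ] [F.IsTriangulated] [F.Additive]
  [F.IsLocalization (coneInK C K)]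

/-- the image of a thick subcategory containing `K` -/
def img (P : ThickSubcat C) (hKP : K.set ⊆ P.set) : ThickSubcat D where
  set := imgSet F P
  mem_of_iso := fun e h => by
    obtain ⟨X, hX, ⟨e'⟩⟩ := h
    exact ⟨X, hX, ⟨e' ≪≫ e⟩⟩
  zero_mem Z hZ := ⟨0, TS.zero_obj_mem P, ⟨(F.map_isZero (isZero_zero C)).iso hZ⟩⟩
  shift_mem Y n h := by
    obtain ⟨X, hX, ⟨e'⟩⟩ := h
    exact ⟨X⟦n⟧, P.shift_mem X n hX,
      ⟨(F.commShiftIso n).app X ≪≫ (shiftFunctor D n).mapIso e'⟩⟩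
  ext_mem T hT h₁ h₃ := imgSet_ext K F hKP T hT h₁ h₃
  summand_mem Yb Y₀ i r hir h := imgSet_summand K F hKP Yb Y₀ i r hir h

lemma img_congr {P₁ P₂ : ThickSubcat C} (h : P₁ = P₂) (h₁ : K.set ⊆ P₁.set)
    (h₂ : K.set ⊆ P₂.set) : img K F P₁ h₁ = img K F P₂ h₂ := by subst h; rfl

lemma preT_img (P : ThickSubcat C) (hKP : K.set ⊆ P.set) :
    preT F (img K F P hKP) = P := by
  refine ThickSubcat.set_injective C ?_
  ext X
  constructor
  · rintro ⟨X', hX', ⟨e'⟩⟩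
    exact mem_of_iso_FObj K F hKP hX' e'.symm
  · intro hX
    exact ⟨X, hX, ⟨Iso.refl _⟩⟩

lemma img_preT (Q : ThickSubcat D) :
    img K F (preT F Q) (K_subset_preT K F Q) = Q := by
  haveI : F.EssSurj := Localization.essSurj F (coneInK C K)
  refine ThickSubcat.set_injective D ?_
  ext Y
  constructor
  · rintro ⟨X, hX, ⟨e'⟩⟩
    exact Q.mem_of_iso e' hX
  · intro hY
    exact ⟨F.objPreimage Y, Q.mem_of_iso (F.objObjPreimageIso Y).symm hY,
      ⟨F.objObjPreimageIso Y⟩⟩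

lemma preT_mono {Q₁ Q₂ : ThickSubcat D} (h : Q₁ ≤ Q₂) : preT F Q₁ ≤ preT F Q₂ :=
  fun _ hx => h hx

lemma img_mono {P₁ P₂ : ThickSubcat C} (h₁ : K.set ⊆ P₁.set) (h₂ : K.set ⊆ P₂.set)
    (h : P₁ ≤ P₂) : img K F P₁ h₁ ≤ img K F P₂ h₂ := by
  rintro Y ⟨X, hX, e⟩
  exact ⟨X, h hX, e⟩

include K in
lemma preT_injective {Q₁ Q₂ : ThickSubcat D} (h : preT F Q₁ = preT F Q₂) : Q₁ = Q₂ := by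
  rw [← img_preT K F Q₁, ← img_preT K F Q₂]
  exact img_congr K F h _ _

include K in
lemma preT_lt {Q₁ Q₂ : ThickSubcat D} (h : Q₁ < Q₂) : preT F Q₁ < preT F Q₂ :=
  lt_of_le_of_ne (preT_mono F h.le) (fun heq => h.ne (preT_injective K F heq))

lemma img_lt {P₁ P₂ : ThickSubcat C} (h₁ : K.set ⊆ P₁.set) (h₂ : K.set ⊆ P₂.set)
    (h : P₁ < P₂) : img K F P₁ h₁ < img K F P₂ h₂ := by
  refine lt_of_le_of_ne (img_mono K F h₁ h₂ h.le) (fun heq => h.ne ?_)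
  have := congrArg (preT F) heq
  rwa [preT_img, preT_img] at this

include K in
lemma prime_preT (Q : ThickSubcat D) (hQ : IsPrimeThick D Q) :
    IsPrimeThick C (preT F Q) := by
  obtain ⟨Z₀, hZ₀, hZ₀u⟩ := hQ
  have toD : ∀ (Y : ThickSubcat C), preT F Q < Y →
      ∃ (hKY : K.set ⊆ Y.set), Q < img K F Y hKY ∧ preT F (img K F Y hKY) = Y := by
    intro Y hY1
    have hKY : K.set ⊆ Y.set := (K_subset_preT K F Q).trans hY1.le
    refine ⟨hKY, ?_, preT_img K F Y hKY⟩
    have h1 : Q ≤ img K F Y hKY := by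
      calc Q = img K F (preT F Q) (K_subset_preT K F Q) := (img_preT K F Q).symm
        _ ≤ img K F Y hKY := img_mono K F _ _ hY1.le
    refine lt_of_le_of_ne h1 (fun heq => hY1.ne ?_)
    have h2 := congrArg (preT F) heq
    rwa [preT_img] at h2
  refine ⟨preT F Z₀, ⟨⟨preT_lt K F hZ₀.1, ?_⟩, ?_⟩⟩
  · intro Y hY1 hY2
    obtain ⟨hKY, hQY, hYeq⟩ := toD Y hY1
    have hle : img K F Y hKY ≤ Z₀ := by
      have h3 : img K F Y hKY ≤ img K F (preT F Z₀) (K_subset_preT K F Z₀) :=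
        img_mono K F _ _ hY2
      rwa [img_preT K F Z₀] at h3
    have h5 : img K F Y hKY = Z₀ := le_antisymm hle (hZ₀.2 hQY hle)
    rw [← hYeq, h5]
  · intro X₁ hX₁
    obtain ⟨hKX₁, hQX₁, hX₁eq⟩ := toD X₁ hX₁.1
    have hmin : Minimal (fun Z => Q < Z) (img K F X₁ hKX₁) := by
      refine ⟨hQX₁, ?_⟩
      intro Zz hZz hZzle
      have h6 : preT F Q < preT F Zz := preT_lt K F hZz
      have h7 : preT F Zz ≤ X₁ := by
        have h := preT_mono F hZzle
        rwa [hX₁eq] at h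
      have h8 : X₁ ≤ preT F Zz := hX₁.2 h6 h7
      calc img K F X₁ hKX₁ ≤ img K F (preT F Zz) (K_subset_preT K F Zz) :=
            img_mono K F _ _ h8
        _ = Zz := img_preT K F Zz
    have h9 : img K F X₁ hKX₁ = Z₀ := hZ₀u _ hmin
    rw [← hX₁eq, h9]

lemma prime_img (P : ThickSubcat C) (hKP : K.set ⊆ P.set) (hP : IsPrimeThick C P) :
    IsPrimeThick D (img K F P hKP) := by
  obtain ⟨X₀, hX₀, hX₀u⟩ := hP
  have hKX₀ : K.set ⊆ X₀.set := hKP.trans hX₀.1.le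
  have toC : ∀ (Zz : ThickSubcat D), img K F P hKP < Zz → P < preT F Zz := by
    intro Zz h1
    have h2 : P ≤ preT F Zz := by
      calc P = preT F (img K F P hKP) := (preT_img K F P hKP).symm
        _ ≤ preT F Zz := preT_mono F h1.le
    refine lt_of_le_of_ne h2 (fun heq => h1.ne ?_)
    calc img K F P hKP = img K F (preT F Zz) (K_subset_preT K F Zz) :=
          img_congr K F heq _ _
      _ = Zz := img_preT K F Zz
  refine ⟨img K F X₀ hKX₀, ⟨⟨img_lt K F hKP hKX₀ hX₀.1, ?_⟩, ?_⟩⟩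
  · intro Zz hZz hZzle
    have h3 : P < preT F Zz := toC Zz hZz
    have h4 : preT F Zz ≤ X₀ := by
      have h := preT_mono F hZzle
      rwa [preT_img K F X₀ hKX₀] at h
    have h5 : X₀ ≤ preT F Zz := hX₀.2 h3 h4
    calc img K F X₀ hKX₀ ≤ img K F (preT F Zz) (K_subset_preT K F Zz) :=
          img_mono K F _ _ h5
      _ = Zz := img_preT K F Zz
  · intro Z₁ hZ₁
    have h3 : P < preT F Z₁ := toC Z₁ hZ₁.1
    have hmin : Minimal (fun Y => P < Y) (preT F Z₁) := by
      refine ⟨h3, ?_⟩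
      intro Yy hYy hYyle
      have hKYy : K.set ⊆ Yy.set := hKP.trans hYy.le
      have h6 : img K F P hKP < img K F Yy hKYy := img_lt K F _ _ hYy
      have h7 : img K F Yy hKYy ≤ Z₁ := by
        have h := img_mono K F hKYy (K_subset_preT K F Z₁) hYyle
        rwa [img_preT K F Z₁] at h
      have h8 : Z₁ ≤ img K F Yy hKYy := hZ₁.2 h6 h7
      have h := preT_mono F h8
      rwa [preT_img K F Yy hKYy] at h
    have h9 : preT F Z₁ = X₀ := hX₀u _ hmin
    calc Z₁ = img K F (preT F Z₁) (K_subset_preT K F Z₁) := (img_preT K F Z₁).symm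
      _ = img K F X₀ hKX₀ := img_congr K F h9 _ _

end VerdierAux
end
section
open CategoryTheory Limits Pretriangulated ZeroObject CategoryTheory.Category
namespace VerdierAux

variable {C : Type u₁} [Category.{v₁} C] [Preadditive C] [HasZeroObject C]
  [HasShift C ℤ] [∀ n : ℤ, (shiftFunctor C n).Additive] [Pretriangulated C]
variable (K : ThickSubcat C)
variable {D : Type u₂} [Category.{v₂} D] [Preadditive D] [HasZeroObject D]
  [HasShift D ℤ] [∀ n : ℤ, (shiftFunctor D n).Additive] [Pretriangulated D]
variable (F : C ⥤ D) [F.CommShift ℤ] [F.IsTriangulated] [F.Additive]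
  [F.IsLocalization (coneInK C K)]

/-- the comparison map on spectra -/
def gMap : SpecTri D → SpecTri C := fun Q => ⟨preT F Q.1, prime_preT K F Q.1 Q.2⟩

lemma gMap_set (Q : SpecTri D) : (gMap K F Q).1.set = F.obj ⁻¹' Q.1.set := rfl

lemma gMap_injective : Function.Injective (gMap K F) := by
  intro Q₁ Q₂ h
  exact Subtype.ext (preT_injective K F (congrArg Subtype.val h))

lemma gMap_supp (M : C) : gMap K F ⁻¹' suppObj C M = suppObj D (F.obj M) := rfl

lemma gMap_continuous : Continuous (gMap K F) := by
  apply continuous_generateFrom_iff.mpr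
  rintro U ⟨M, rfl⟩
  have h : gMap K F ⁻¹' (suppObj C M)ᶜ = (suppObj D (F.obj M))ᶜ := by
    rw [Set.preimage_compl, gMap_supp]
  rw [h]
  exact TopologicalSpace.isOpen_generateFrom_of_mem ⟨F.obj M, rfl⟩

lemma gMap_range : Set.range (gMap K F) = {P : SpecTri C | K.set ⊆ P.1.set} := by
  ext P
  constructor
  · rintro ⟨Q, rfl⟩
    exact K_subset_preT K F Q.1
  · intro hP
    exact ⟨⟨img K F P.1 hP, prime_img K F P.1 hP P.2⟩, Subtype.ext (preT_img K F P.1 hP)⟩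

lemma suppObj_congr_iso {N N' : D} (e : N ≅ N') : suppObj D N = suppObj D N' := by
  ext Q
  constructor
  · intro hQ hmem
    exact hQ (Q.1.mem_of_iso e.symm hmem)
  · intro hQ hmem
    exact hQ (Q.1.mem_of_iso e hmem)

lemma gMap_embedding : Topology.IsEmbedding (gMap K F) := by
  haveI : F.EssSurj := Localization.essSurj F (coneInK C K)
  refine ⟨⟨?_⟩, gMap_injective K F⟩
  show TopologicalSpace.generateFrom {U | ∃ M : D, U = (suppObj D M)ᶜ}
    = TopologicalSpace.induced (gMap K F)
        (TopologicalSpace.generateFrom {U | ∃ M : C, U = (suppObj C M)ᶜ})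
  rw [induced_generateFrom_eq]
  congr 1
  ext U
  constructor
  · rintro ⟨N, rfl⟩
    refine ⟨(suppObj C (F.objPreimage N))ᶜ, ⟨F.objPreimage N, rfl⟩, ?_⟩
    rw [Set.preimage_compl, gMap_supp,
      suppObj_congr_iso (F.objObjPreimageIso N)]
  · rintro ⟨V, ⟨M, rfl⟩, rfl⟩
    exact ⟨F.obj M, by rw [Set.preimage_compl, gMap_supp]⟩

end VerdierAux
end

open VerdierAux in
/-- Let `K` be a thick subcategory of `T` and `F : T → T/K` the Verdier quotient functor
(modelled as a localization at the morphisms with cone in `K`). Then the induced map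
`ᵃF : Spec△(T/K) → Spec△(T)`, `Q ↦ F⁻¹(Q)`, is injective and continuous with image
`{P ∈ Spec△(T) | K ⊆ P}`, satisfies `(ᵃF)⁻¹(Supp△ M) = Supp△(F M)` for every object `M`
of `T`, and is a topological embedding onto its image. -/
theorem stmt19 (D : Type*) [Category D] [Preadditive D] [HasZeroObject D]
    [HasShift D ℤ] [∀ n : ℤ, (shiftFunctor D n).Additive] [Pretriangulated D]
    (K : ThickSubcat C) (F : C ⥤ D) [F.CommShift ℤ] [F.IsTriangulated] [F.Additive]
    [F.IsLocalization (coneInK C K)] :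
    ∃ g : SpecTri D → SpecTri C,
      (∀ Q : SpecTri D, (g Q).1.set = F.obj ⁻¹' Q.1.set) ∧
      Function.Injective g ∧
      Continuous g ∧
      Set.range g = {P : SpecTri C | K.set ⊆ P.1.set} ∧
      (∀ M : C, g ⁻¹' suppObj C M = suppObj D (F.obj M)) ∧
      Topology.IsEmbedding g :=
  ⟨gMap K F, gMap_set K F, gMap_injective K F, gMap_continuous K F,
    gMap_range K F, gMap_supp K F, gMap_embedding K F⟩
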